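/- arXiv:2406.13652 — 3 statements merged into one kernel-verified Lean document; each statement's English description precedes it below -/
import Mathlib

section
/- Let θ : ℝ → ℝ be continuous with θ(t) > 0, Θ(t) = ∫_0^t θ(s) ds, λ ≠ 0, τ ≠ 0, and σ(t)² = 2θ(t)λ². Define m(t) = μ(1 − e^{−Θ(t)}) + x₀e^{−Θ(t)}, v(t) = τ²λ²(1 − e^{−2Θ(t)}), and p(t, x) = (2π v(t))^{−1/2} exp(−(x − m(t))²/(2v(t))). Then for every t > 0 and every x ∈ ℝ, p satisfies the Fokker–Planck (Kolmogorov forward) equation ∂_t p(t,x) = −∂_x[θ(t)(μ − x)·p(t,x)] + (1/2)·τ²σ(t)²·∂_x² p(t,x). -/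
open Real intervalIntegral

/-- The D³GM forward marginal satisfies the Fokker–Planck (Kolmogorov forward)
equation: with `Θ(t) = ∫_0^t θ`, mean `m(t) = μ(1 − e^{−Θ(t)}) + x₀ e^{−Θ(t)}`,
variance `v(t) = τ²λ²(1 − e^{−2Θ(t)})` (under the measure-preserving constraint
`σ(t)² = 2θ(t)λ²`), the Gaussian density
`p(t,x) = (2π v(t))^{−1/2} exp(−(x − m(t))²/(2 v(t)))` satisfies
`∂_t p = −∂_x[θ(t)(μ − x) p] + (1/2) τ² σ(t)² ∂_x² p` for all `t > 0`, `x`. -/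
theorem d3gm_fokker_planck (θ σ : ℝ → ℝ) (hθc : Continuous θ)
    (hθ : ∀ t, 0 < θ t) (lam τ μ x₀ : ℝ) (hlam : lam ≠ 0) (hτ : τ ≠ 0)
    (hσ : ∀ t, (σ t) ^ 2 = 2 * θ t * lam ^ 2)
    (Θ m v : ℝ → ℝ) (p : ℝ → ℝ → ℝ)
    (hΘ : ∀ t, Θ t = ∫ s in (0:ℝ)..t, θ s)
    (hm : ∀ t, m t = μ * (1 - Real.exp (-Θ t)) + x₀ * Real.exp (-Θ t))
    (hv : ∀ t, v t = τ ^ 2 * lam ^ 2 * (1 - Real.exp (-(2 * Θ t))))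
    (hp : ∀ t x, p t x = (2 * Real.pi * v t) ^ (-(1:ℝ)/2) *
      Real.exp (-(x - m t) ^ 2 / (2 * v t))) :
    ∀ t : ℝ, 0 < t → ∀ x : ℝ,
      deriv (fun t' => p t' x) t =
        -(deriv (fun x' => θ t * (μ - x') * p t x') x) +
          (1 / 2) * τ ^ 2 * (σ t) ^ 2 *
            deriv (fun x' => deriv (fun y => p t y) x') x := by
  intro t ht x
  have hΘfun : Θ = fun u => ∫ s in (0:ℝ)..u, θ s := funext hΘ
  have hΘder : HasDerivAt Θ (θ t) t := by
    rw [hΘfun]; exact (hθc.integral_hasStrictDerivAt 0 t).hasDerivAt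
  have hΘpos : 0 < Θ t := by
    rw [hΘ]
    exact intervalIntegral_pos_of_pos (hθc.intervalIntegrable 0 t) (fun s => hθ s) ht
  set c : ℝ := τ ^ 2 * lam ^ 2 with hcdef
  have hcpos : 0 < c := by positivity
  have hE2 : Real.exp (-(2 * Θ t)) < 1 := by
    apply Real.exp_lt_one_iff.mpr; nlinarith
  have hVpos : 0 < v t := by
    rw [hv t]; have : 0 < 1 - Real.exp (-(2 * Θ t)) := by linarith
    positivity
  have hVne : v t ≠ 0 := ne_of_gt hVpos
  have h2piV : 0 < 2 * Real.pi * v t := by positivity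
  -- derivative of m
  have hMder : HasDerivAt m (θ t * (μ - m t)) t := by
    have hE : HasDerivAt (fun u => Real.exp (-Θ u)) (Real.exp (-Θ t) * -(θ t)) t :=
      (hΘder.neg).exp
    have h1 : HasDerivAt (fun u => μ * (1 - Real.exp (-Θ u)) + x₀ * Real.exp (-Θ u))
        (μ * (0 - Real.exp (-Θ t) * -(θ t)) + x₀ * (Real.exp (-Θ t) * -(θ t))) t :=
      (((hasDerivAt_const t (1:ℝ)).sub hE).const_mul μ).add (hE.const_mul x₀)
    have h2 : HasDerivAt (fun u => μ * (1 - Real.exp (-Θ u)) + x₀ * Real.exp (-Θ u))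
        (θ t * (μ - m t)) t := h1.congr_deriv (by rw [hm t]; ring)
    rwa [show (fun u => μ * (1 - Real.exp (-Θ u)) + x₀ * Real.exp (-Θ u)) = m from
      (funext hm).symm] at h2
  -- derivative of v
  have hVder : HasDerivAt v (2 * θ t * (c - v t)) t := by
    have hE : HasDerivAt (fun u => Real.exp (-(2 * Θ u)))
        (Real.exp (-(2 * Θ t)) * -(2 * θ t)) t := by
      have := ((hΘder.const_mul 2).neg).exp
      simpa [mul_comm] using this
    have h1 : HasDerivAt (fun u => c * (1 - Real.exp (-(2 * Θ u))))
        (c * (0 - Real.exp (-(2 * Θ t)) * -(2 * θ t))) t :=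
      ((hasDerivAt_const t (1:ℝ)).sub hE).const_mul c
    have h2 : HasDerivAt (fun u => c * (1 - Real.exp (-(2 * Θ u)))) (2 * θ t * (c - v t)) t :=
      h1.congr_deriv (by rw [hv t]; ring)
    rwa [show (fun u => c * (1 - Real.exp (-(2 * Θ u)))) = v from (funext hv).symm] at h2
  -- spatial first derivative
  have hg : ∀ y : ℝ, HasDerivAt (fun y => p t y) (p t y * (-(y - m t) / v t)) y := by
    intro y
    have hinner : HasDerivAt (fun y : ℝ => -(y - m t) ^ 2 / (2 * v t))
        (-(2 * (y - m t) ^ 1 * 1) / (2 * v t)) y :=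
      ((((hasDerivAt_id y).sub_const (m t)).pow 2).neg).div_const (2 * v t)
    have h1 := (hinner.exp).const_mul ((2 * Real.pi * v t) ^ (-(1:ℝ)/2))
    have h2 : HasDerivAt (fun y => (2 * Real.pi * v t) ^ (-(1:ℝ)/2) *
        Real.exp (-(y - m t) ^ 2 / (2 * v t))) (p t y * (-(y - m t) / v t)) y :=
      h1.congr_deriv (by rw [hp t y]; field_simp)
    rwa [show (fun y => (2 * Real.pi * v t) ^ (-(1:ℝ)/2) *
      Real.exp (-(y - m t) ^ 2 / (2 * v t))) = fun y => p t y from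
      funext fun y => (hp t y).symm] at h2
  have hgfun : (deriv fun y => p t y) = fun y => p t y * (-(y - m t) / v t) :=
    funext fun y => (hg y).deriv
  -- time derivative
  have hA : HasDerivAt (fun t' => (2 * Real.pi * v t') ^ (-(1:ℝ)/2))
      ((-(1:ℝ)/2) * (2 * Real.pi * v t) ^ ((-(1:ℝ)/2) - 1) *
        (2 * Real.pi * (2 * θ t * (c - v t)))) t := by
    have hr := Real.hasDerivAt_rpow_const (p := (-(1:ℝ)/2)) (Or.inl (ne_of_gt h2piV))
    have hc2 : HasDerivAt (fun t' => 2 * Real.pi * v t') (2 * Real.pi * (2 * θ t * (c - v t))) t :=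
      hVder.const_mul (2 * Real.pi)
    exact hr.comp t hc2
  have hq : HasDerivAt (fun t' => -(x - m t') ^ 2 / (2 * v t'))
      ((-(2 * (x - m t) ^ 1 * (0 - θ t * (μ - m t))) * (2 * v t) -
        -(x - m t) ^ 2 * (2 * (2 * θ t * (c - v t)))) / (2 * v t) ^ 2) t := by
    have hnum : HasDerivAt (fun t' => -(x - m t') ^ 2)
        (-(2 * (x - m t) ^ 1 * (0 - θ t * (μ - m t)))) t :=
      (((hasDerivAt_const t x).sub hMder).pow 2).neg
    have hden : HasDerivAt (fun t' => 2 * v t') (2 * (2 * θ t * (c - v t))) t :=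
      hVder.const_mul 2
    exact hnum.div hden (by positivity)
  have hTime : HasDerivAt (fun t' => p t' x)
      ((-(1:ℝ)/2) * (2 * Real.pi * v t) ^ ((-(1:ℝ)/2) - 1) *
          (2 * Real.pi * (2 * θ t * (c - v t))) * Real.exp (-(x - m t) ^ 2 / (2 * v t)) +
        (2 * Real.pi * v t) ^ (-(1:ℝ)/2) *
          (Real.exp (-(x - m t) ^ 2 / (2 * v t)) *
            ((-(2 * (x - m t) ^ 1 * (0 - θ t * (μ - m t))) * (2 * v t) -
              -(x - m t) ^ 2 * (2 * (2 * θ t * (c - v t)))) / (2 * v t) ^ 2))) t := by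
    have := hA.mul hq.exp
    simp only [Pi.mul_def] at this
    rwa [show (fun t' => (2 * Real.pi * v t') ^ (-(1:ℝ)/2) *
      Real.exp (-(x - m t') ^ 2 / (2 * v t'))) = fun t' => p t' x from
      funext fun t' => (hp t' x).symm] at this
  -- spatial second derivative
  have hsecond : HasDerivAt (fun x' => p t x' * (-(x' - m t) / v t))
      (p t x * (-(x - m t) / v t) * (-(x - m t) / v t) +
        p t x * (-(1 - 0) / v t)) x := by
    have hlin : HasDerivAt (fun x' : ℝ => -(x' - m t) / v t) (-(1 - 0) / v t) x :=
      (((hasDerivAt_id x).sub (hasDerivAt_const x (m t))).neg).div_const (v t)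
    simpa [Pi.mul_def] using (hg x).mul hlin
  -- drift derivative
  have hdrift : HasDerivAt (fun x' => θ t * (μ - x') * p t x')
      (θ t * (0 - 1) * p t x + θ t * (μ - x) * (p t x * (-(x - m t) / v t))) x := by
    have h1 : HasDerivAt (fun x' : ℝ => θ t * (μ - x')) (θ t * (0 - 1)) x :=
      ((hasDerivAt_const x μ).sub (hasDerivAt_id x)).const_mul (θ t)
    simpa [Pi.mul_def] using h1.mul (hg x)
  rw [hTime.deriv, hdrift.deriv, hgfun, hsecond.deriv, hσ t, hp t x]
  have hpow : (2 * Real.pi * v t) ^ ((-(1:ℝ)/2) - 1) =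
      (2 * Real.pi * v t) ^ (-(1:ℝ)/2) / (2 * Real.pi * v t) := by
    rw [Real.rpow_sub h2piV, Real.rpow_one]
  rw [hpow]
  have hpi : Real.pi ≠ 0 := Real.pi_ne_zero
  field_simp
  ring
end

section
/- Let d ≥ 1 and let ε = (ε₁, …, ε_d) be distributed according to the d-fold product of the standard real Gaussian measure N(0,1). Then for every t ≥ 0, P(∑_{i=1}^d ε_i² ≥ d + 2√(d·t) + 2t) ≤ exp(−t). Equivalently, for every δ ∈ (0,1), with probability at least 1 − δ one has ∑_{i=1}^d ε_i² < d + 2√(d·log(1/δ)) + 2·log(1/δ). -/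
open Real MeasureTheory ProbabilityTheory
open scoped ENNReal NNReal

lemma gauss1d {l : ℝ} (hl : l < 1/2) :
    Integrable (fun x : ℝ => Real.exp (l * x ^ 2)) (gaussianReal 0 1) ∧
    ∫ x, Real.exp (l * x ^ 2) ∂(gaussianReal 0 1) = (Real.sqrt (1 - 2*l))⁻¹ := by
  have hb : (0:ℝ) < 1/2 - l := by linarith
  have hmeas : gaussianReal 0 1 = volume.withDensity (gaussianPDF 0 1) :=
    gaussianReal_of_var_ne_zero 0 one_ne_zero
  have hpdf : ∀ x : ℝ, (gaussianPDF 0 1 x).toReal = gaussianPDFReal 0 1 x := by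
    intro x
    rw [gaussianPDF_def]
    exact ENNReal.toReal_ofReal (gaussianPDFReal_nonneg 0 1 x)
  have hprod : ∀ x : ℝ, Real.exp (l * x ^ 2) * gaussianPDFReal 0 1 x
      = (Real.sqrt (2 * π))⁻¹ * Real.exp (-(1/2 - l) * x ^ 2) := by
    intro x
    simp only [gaussianPDFReal, NNReal.coe_one, mul_one, sub_zero]
    rw [mul_comm (rexp _), mul_assoc, ← Real.exp_add]
    congr 1
    ring_nf
  constructor
  · rw [hmeas, integrable_withDensity_iff (measurable_gaussianPDF 0 1)
      (ae_of_all _ fun x => ENNReal.ofReal_lt_top)]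
    simp only [hpdf]
    have : (fun x : ℝ => Real.exp (l * x ^ 2) * gaussianPDFReal 0 1 x)
        = fun x => (Real.sqrt (2 * π))⁻¹ * Real.exp (-(1/2 - l) * x ^ 2) := by
      funext x; exact hprod x
    rw [this]
    exact (integrable_exp_neg_mul_sq hb).const_mul _
  · rw [hmeas, gaussianPDF_def]
    have : (fun x : ℝ => ENNReal.ofReal (gaussianPDFReal 0 1 x))
        = fun x => ((gaussianPDFReal 0 1 x).toNNReal : ℝ≥0∞) := rfl
    rw [this, integral_withDensity_eq_integral_smul
      ((measurable_gaussianPDFReal 0 1).real_toNNReal)]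
    have heq : (fun x : ℝ => (gaussianPDFReal 0 1 x).toNNReal • Real.exp (l * x ^ 2))
        = fun x => (Real.sqrt (2 * π))⁻¹ * Real.exp (-(1/2 - l) * x ^ 2) := by
      funext x
      rw [NNReal.smul_def, smul_eq_mul,
        Real.coe_toNNReal _ (gaussianPDFReal_nonneg 0 1 x), mul_comm]
      exact hprod x
    rw [heq, MeasureTheory.integral_const_mul, integral_gaussian]
    rw [show π / (1/2 - l) = ((1 - 2*l)⁻¹) * (2 * π) by field_simp]
    rw [Real.sqrt_mul (inv_nonneg.mpr (by linarith) : (0:ℝ) ≤ (1 - 2*l)⁻¹), Real.sqrt_inv,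
      Real.sqrt_mul (by norm_num : (0:ℝ) ≤ 2) π]
    have hne : Real.sqrt 2 * Real.sqrt π ≠ 0 := by positivity
    field_simp

lemma gausspi (d : ℕ) {l : ℝ} (hl : l < 1/2) :
    Integrable (fun ε : Fin d → ℝ => Real.exp (l * ∑ i, (ε i) ^ 2))
      (Measure.pi fun _ : Fin d => gaussianReal 0 1) ∧
    ∫ ε : Fin d → ℝ, Real.exp (l * ∑ i, (ε i) ^ 2)
        ∂(Measure.pi fun _ : Fin d => gaussianReal 0 1)
      = ((Real.sqrt (1 - 2*l))⁻¹) ^ d := by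
  letI : MeasureSpace ℝ := ⟨gaussianReal 0 1⟩
  haveI : SigmaFinite (volume : Measure ℝ) :=
    (inferInstance : SigmaFinite (gaussianReal 0 1))
  have hpi : (Measure.pi fun _ : Fin d => gaussianReal 0 1)
      = (volume : Measure (Fin d → ℝ)) := by
    rw [volume_pi]; rfl
  have hfun : (fun ε : Fin d → ℝ => Real.exp (l * ∑ i, (ε i) ^ 2))
      = fun ε : Fin d → ℝ => ∏ i, Real.exp (l * (ε i) ^ 2) := by
    funext ε
    rw [← Real.exp_sum, Finset.mul_sum]
  rw [hpi, hfun]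
  constructor
  · exact Integrable.fintype_prod (fun _ => (gauss1d hl).1)
  · rw [volume_pi, MeasureTheory.integral_fintype_prod_eq_pow
      (fun x : ℝ => Real.exp (l * x ^ 2))]
    rw [show (volume : Measure ℝ) = gaussianReal 0 1 from rfl, (gauss1d hl).2]
    simp

/-- Laurent–Massart one-sided χ² tail bound: if `ε = (ε₁, …, ε_d)` is a vector
of i.i.d. standard Gaussians (`d ≥ 1`), then for every `t ≥ 0`,
`P(∑ εᵢ² ≥ d + 2√(dt) + 2t) ≤ e^{−t}`; equivalently, for every `δ ∈ (0,1)`,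
with probability at least `1 − δ`,
`∑ εᵢ² < d + 2√(d log(1/δ)) + 2 log(1/δ)`. -/
theorem chi_square_tail_bound (d : ℕ) (hd : 1 ≤ d) :
    (∀ t : ℝ, 0 ≤ t →
      (Measure.pi (fun _ : Fin d => gaussianReal 0 1))
          {ε | (d : ℝ) + 2 * Real.sqrt ((d : ℝ) * t) + 2 * t ≤
            ∑ i, (ε i) ^ 2} ≤ ENNReal.ofReal (Real.exp (-t))) ∧
    (∀ δ : ℝ, 0 < δ → δ < 1 →
      ENNReal.ofReal (1 - δ) ≤
        (Measure.pi (fun _ : Fin d => gaussianReal 0 1))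
          {ε | ∑ i, (ε i) ^ 2 <
            (d : ℝ) + 2 * Real.sqrt ((d : ℝ) * Real.log (1 / δ)) +
              2 * Real.log (1 / δ)}) := by
  have hd0 : (0:ℝ) < d := by exact_mod_cast hd
  have main : ∀ t : ℝ, 0 ≤ t →
      (Measure.pi (fun _ : Fin d => gaussianReal 0 1))
          {ε | (d : ℝ) + 2 * Real.sqrt ((d : ℝ) * t) + 2 * t ≤
            ∑ i, (ε i) ^ 2} ≤ ENNReal.ofReal (Real.exp (-t)) := by
    intro t ht
    set μ : Measure (Fin d → ℝ) := Measure.pi (fun _ : Fin d => gaussianReal 0 1) with hμ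
    set s : ℝ := Real.sqrt (t / d) with hsdef
    have hs : 0 ≤ s := Real.sqrt_nonneg _
    have hts : (d:ℝ) * s ^ 2 = t := by
      rw [hsdef, Real.sq_sqrt (div_nonneg ht hd0.le)]
      field_simp
    have hsd : Real.sqrt ((d:ℝ) * t) = d * s := by
      rw [show (d:ℝ) * t = ((d:ℝ) * s) ^ 2 by rw [← hts]; ring]
      exact Real.sqrt_sq (by positivity)
    have h1 : (0:ℝ) < 1 + 2 * s := by linarith
    set l : ℝ := s / (1 + 2 * s) with hldef
    have hl0 : 0 ≤ l := div_nonneg hs h1.le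
    have hl : l < 1 / 2 := by rw [hldef, div_lt_iff₀ h1]; linarith
    set a : ℝ := (d : ℝ) + 2 * Real.sqrt ((d : ℝ) * t) + 2 * t with hadef
    have chernoff := measure_ge_le_exp_mul_mgf (X := fun ε : Fin d → ℝ => ∑ i, (ε i) ^ 2)
      (μ := μ) a hl0 (gausspi d hl).1
    have hmgf : mgf (fun ε : Fin d → ℝ => ∑ i, (ε i) ^ 2) μ l
        = ((Real.sqrt (1 - 2 * l))⁻¹) ^ d := (gausspi d hl).2
    have hinv : (Real.sqrt (1 - 2 * l))⁻¹ = Real.sqrt (1 + 2 * s) := by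
      rw [show 1 - 2 * l = (1 + 2 * s)⁻¹ by rw [hldef]; field_simp; ring]
      rw [Real.sqrt_inv, inv_inv]
    set w : ℝ := s * (1 + s) / (1 + 2 * s) with hwdef
    have hw : 0 ≤ w := by positivity
    have hkey : s ≤ w + w ^ 2 := by
      have h2 : w + w ^ 2 - s = s ^ 4 / (1 + 2 * s) ^ 2 := by
        rw [hwdef]; field_simp; ring
      have h3 : 0 ≤ s ^ 4 / (1 + 2 * s) ^ 2 := by positivity
      linarith
    have h1exp : 1 + 2 * s ≤ Real.exp (2 * w) := by
      have hq := Real.quadratic_le_exp_of_nonneg (by linarith : (0:ℝ) ≤ 2 * w)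
      nlinarith
    have hsqle : Real.sqrt (1 + 2 * s) ≤ Real.exp w := by
      have h4 : Real.exp (2 * w) = Real.exp w ^ 2 := by
        rw [sq, ← Real.exp_add]; ring_nf
      calc Real.sqrt (1 + 2 * s) ≤ Real.sqrt (Real.exp w ^ 2) :=
            Real.sqrt_le_sqrt (by rw [← h4]; exact h1exp)
        _ = Real.exp w := Real.sqrt_sq (Real.exp_nonneg w)
    have hpow : Real.sqrt (1 + 2 * s) ^ d ≤ Real.exp ((d:ℕ) * w) := by
      rw [Real.exp_nat_mul]
      exact pow_le_pow_left₀ (Real.sqrt_nonneg _) hsqle d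
    have hexpeq : Real.exp (-l * a) * Real.exp ((d:ℕ) * w) = Real.exp (-t) := by
      rw [← Real.exp_add]
      congr 1
      rw [hadef, hsd, ← hts, hldef, hwdef]
      field_simp
      ring
    have hfinal : (μ {ε | a ≤ ∑ i, (ε i) ^ 2}).toReal ≤ Real.exp (-t) := by
      calc (μ {ε | a ≤ ∑ i, (ε i) ^ 2}).toReal
          ≤ Real.exp (-l * a) * mgf (fun ε : Fin d → ℝ => ∑ i, (ε i) ^ 2) μ l := chernoff
        _ = Real.exp (-l * a) * Real.sqrt (1 + 2 * s) ^ d := by rw [hmgf, hinv]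
        _ ≤ Real.exp (-l * a) * Real.exp ((d:ℕ) * w) := by
            exact mul_le_mul_of_nonneg_left hpow (Real.exp_nonneg _)
        _ = Real.exp (-t) := hexpeq
    rw [← ENNReal.ofReal_toReal (measure_ne_top μ _)]
    exact ENNReal.ofReal_le_ofReal hfinal
  refine ⟨main, fun δ hδ0 hδ1 => ?_⟩
  set t : ℝ := Real.log (1 / δ) with htdef
  have ht : 0 ≤ t := Real.log_nonneg (by rw [le_div_iff₀ hδ0]; linarith)
  have hexp : Real.exp (-t) = δ := by
    rw [htdef, Real.exp_neg, Real.exp_log (by positivity), one_div, inv_inv]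
  set μ : Measure (Fin d → ℝ) := Measure.pi (fun _ : Fin d => gaussianReal 0 1) with hμ
  set a : ℝ := (d : ℝ) + 2 * Real.sqrt ((d : ℝ) * t) + 2 * t with hadef
  have hXmeas : Measurable (fun ε : Fin d → ℝ => ∑ i, (ε i) ^ 2) :=
    Finset.measurable_sum _ fun i _ => (measurable_pi_apply i).pow_const 2
  have hA : MeasurableSet {ε : Fin d → ℝ | a ≤ ∑ i, (ε i) ^ 2} :=
    measurableSet_le measurable_const hXmeas
  have hcompl : {ε : Fin d → ℝ | ∑ i, (ε i) ^ 2 < a}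
      = {ε : Fin d → ℝ | a ≤ ∑ i, (ε i) ^ 2}ᶜ := by
    ext ε; simp [not_le]
  rw [hcompl, prob_compl_eq_one_sub hA,
    ENNReal.ofReal_sub _ hδ0.le, ENNReal.ofReal_one]
  refine tsub_le_tsub_left ?_ 1
  calc μ {ε : Fin d → ℝ | a ≤ ∑ i, (ε i) ^ 2} ≤ ENNReal.ofReal (Real.exp (-t)) := main t ht
    _ = ENNReal.ofReal δ := by rw [hexp]
end

section
/- Fix x₀ ≠ μ, λ ≠ 0, Θ(T) > 0, and set c = 1 − e^{−2Θ(T)} ∈ (0,1). For τ > 0, let P_τ = N(μ(1 − e^{−Θ(T)}) + x₀e^{−Θ(T)}, τ²λ²c) (the law of the D³GM forward state x_T) and Q_τ = N(μ, τ²λ²) (the target stationary law x_∞). Then the Kullback–Leibler divergence satisfies KL(P_τ ‖ Q_τ) = −(1/2)·log c − (1/2)·e^{−2Θ(T)} + (x₀ − μ)²·e^{−2Θ(T)}/(2τ²λ²), and τ ↦ KL(P_τ ‖ Q_τ) is strictly decreasing on (0, ∞). Hence increasing the stiffness τ > 1 brings the distribution of x_T strictly closer (in KL) to the distribution of x_∞.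 -/
open Real MeasureTheory ProbabilityTheory
open scoped NNReal ENNReal


lemma aux_int_odd {b : ℝ} (hb : 0 < b) :
    ∫ x : ℝ, x * rexp (-b * x ^ 2) = 0 := by
  have hemb : MeasurableEmbedding (fun x : ℝ => -x) :=
    (Homeomorph.neg ℝ).isClosedEmbedding.measurableEmbedding
  have h1 : ∫ x : ℝ, x * rexp (-b * x ^ 2)
      = ∫ x : ℝ, (fun y : ℝ => y * rexp (-b * y ^ 2)) (-x) := by
    conv_lhs => rw [← Measure.map_neg_eq_self (volume : Measure ℝ)]
    exact hemb.integral_map _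
  have h2 : ∫ x : ℝ, (fun y : ℝ => y * rexp (-b * y ^ 2)) (-x)
      = - ∫ x : ℝ, x * rexp (-b * x ^ 2) := by
    simp only [neg_sq, neg_mul]
    exact integral_neg _
  linarith [h1.trans h2]

lemma aux_int_sq {b : ℝ} (hb : 0 < b) :
    ∫ x : ℝ, x ^ 2 * rexp (-b * x ^ 2) = Real.sqrt π / 2 * b ^ (-(3:ℝ)/2) := by
  have h0 : ∫ x : ℝ, x ^ 2 * rexp (-b * x ^ 2)
      = 2 * ∫ x in Set.Ioi (0:ℝ), x ^ 2 * rexp (-b * x ^ 2) := by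
    rw [← integral_comp_abs (f := fun x => x ^ 2 * rexp (-b * x ^ 2))]
    simp [sq_abs]
  have h1 : ∫ x in Set.Ioi (0:ℝ), x ^ 2 * rexp (-b * x ^ 2)
      = ∫ x in Set.Ioi (0:ℝ), x ^ (2:ℝ) * rexp (-b * x ^ (2:ℝ)) := by
    refine setIntegral_congr_fun measurableSet_Ioi (fun x hx => ?_)
    rw [show ((2:ℝ)) = ((2:ℕ):ℝ) by norm_num, Real.rpow_natCast]
  have h2 := integral_rpow_mul_exp_neg_mul_rpow (p := 2) (q := 2)
    (by norm_num) (by norm_num) hb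
  have hΓ : Real.Gamma ((2 + 1) / 2) = Real.sqrt π / 2 := by
    rw [show ((2:ℝ) + 1) / 2 = 1/2 + 1 by norm_num,
      Real.Gamma_add_one (by norm_num), Real.Gamma_one_half_eq]
    ring
  rw [h0, h1, h2, hΓ]
  rw [show (-((2:ℝ) + 1) / 2) = -(3:ℝ)/2 by norm_num]
  ring


lemma pdf0_eq (v : ℝ≥0) (x : ℝ) :
    gaussianPDFReal 0 v x = (√(2 * π * v))⁻¹ * rexp (-(2 * (v:ℝ))⁻¹ * x ^ 2) := by
  rw [gaussianPDFReal]
  congr 1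
  rw [sub_zero]
  congr 1
  by_cases h : (v:ℝ) = 0
  · simp [h]
  · field_simp

lemma integrable_sq_pdf0 (v : ℝ≥0) (hv : v ≠ 0) :
    Integrable (fun x : ℝ => x ^ 2 * gaussianPDFReal 0 v x) := by
  have hvpos : (0:ℝ) < v := lt_of_le_of_ne v.coe_nonneg (by exact_mod_cast hv.symm)
  have hb : (0:ℝ) < (2 * (v:ℝ))⁻¹ := by positivity
  have h := (integrable_rpow_mul_exp_neg_mul_sq hb (s := 2) (by norm_num)).const_mul
    ((√(2 * π * v))⁻¹)
  refine h.congr (ae_of_all _ fun x => ?_)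
  simp only []
  rw [pdf0_eq]
  rw [show ((2:ℝ)) = ((2:ℕ):ℝ) by norm_num, Real.rpow_natCast]
  ring

lemma integrable_id_pdf0 (v : ℝ≥0) (hv : v ≠ 0) :
    Integrable (fun x : ℝ => x * gaussianPDFReal 0 v x) := by
  have hvpos : (0:ℝ) < v := lt_of_le_of_ne v.coe_nonneg (by exact_mod_cast hv.symm)
  have hb : (0:ℝ) < (2 * (v:ℝ))⁻¹ := by positivity
  have h := (integrable_mul_exp_neg_mul_sq hb).const_mul ((√(2 * π * v))⁻¹)
  refine h.congr (ae_of_all _ fun x => ?_)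
  simp only []
  rw [pdf0_eq]; ring

lemma moment1_pdf0 (v : ℝ≥0) (hv : v ≠ 0) :
    ∫ x : ℝ, x * gaussianPDFReal 0 v x = 0 := by
  have hvpos : (0:ℝ) < v := lt_of_le_of_ne v.coe_nonneg (by exact_mod_cast hv.symm)
  have hb : (0:ℝ) < (2 * (v:ℝ))⁻¹ := by positivity
  calc ∫ x : ℝ, x * gaussianPDFReal 0 v x
      = ∫ x : ℝ, (√(2 * π * v))⁻¹ * (x * rexp (-(2 * (v:ℝ))⁻¹ * x ^ 2)) := by
        congr 1; ext x; rw [pdf0_eq]; ring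
    _ = (√(2 * π * v))⁻¹ * ∫ x : ℝ, x * rexp (-(2 * (v:ℝ))⁻¹ * x ^ 2) :=
        integral_const_mul _ _
    _ = 0 := by rw [aux_int_odd hb, mul_zero]

lemma moment2_pdf0 (v : ℝ≥0) (hv : v ≠ 0) :
    ∫ x : ℝ, x ^ 2 * gaussianPDFReal 0 v x = v := by
  have hvpos : (0:ℝ) < v := lt_of_le_of_ne v.coe_nonneg (by exact_mod_cast hv.symm)
  have hb : (0:ℝ) < (2 * (v:ℝ))⁻¹ := by positivity
  have step : ∫ x : ℝ, x ^ 2 * gaussianPDFReal 0 v x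
      = (√(2 * π * v))⁻¹ * (Real.sqrt π / 2 * ((2 * (v:ℝ))⁻¹) ^ (-(3:ℝ)/2)) := by
    calc ∫ x : ℝ, x ^ 2 * gaussianPDFReal 0 v x
        = ∫ x : ℝ, (√(2 * π * v))⁻¹ * (x ^ 2 * rexp (-(2 * (v:ℝ))⁻¹ * x ^ 2)) := by
          congr 1; ext x; rw [pdf0_eq]; ring
      _ = (√(2 * π * v))⁻¹ * ∫ x : ℝ, x ^ 2 * rexp (-(2 * (v:ℝ))⁻¹ * x ^ 2) :=
          integral_const_mul _ _
      _ = _ := by rw [aux_int_sq hb]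
  rw [step]
  -- now pure computation
  set s : ℝ := Real.sqrt (2 * v) with hs
  have hs_pos : 0 < s := Real.sqrt_pos.mpr (by positivity)
  have hs_sq : s ^ 2 = 2 * (v:ℝ) := Real.sq_sqrt (by positivity)
  have hsqrt : Real.sqrt (2 * π * v) = Real.sqrt π * s := by
    rw [hs, ← Real.sqrt_mul (le_of_lt pi_pos)]
    congr 1; ring
  have hrpow : ((2 * (v:ℝ))⁻¹) ^ (-(3:ℝ)/2) = s ^ 3 := by
    rw [← hs_sq, ← Real.rpow_natCast s 2, ← Real.rpow_neg_one,
      ← Real.rpow_natCast s 3, ← Real.rpow_mul hs_pos.le, ← Real.rpow_mul hs_pos.le]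
    norm_num
  rw [hsqrt, hrpow]
  have hπ : (0:ℝ) < Real.sqrt π := Real.sqrt_pos.mpr pi_pos
  field_simp
  linear_combination hs_sq


lemma gaussian0_poly (v : ℝ≥0) (hv : v ≠ 0) (A B C : ℝ) :
    ∫ x, (A + B * x ^ 2 + C * x) ∂(gaussianReal 0 v) = A + B * v := by
  rw [gaussianReal_of_var_ne_zero 0 hv]
  have hmeas : Measurable (fun x => Real.toNNReal (gaussianPDFReal 0 v x)) :=
    (measurable_gaussianPDFReal 0 v).real_toNNReal
  have hd : gaussianPDF 0 v
      = fun x => ((fun x => Real.toNNReal (gaussianPDFReal 0 v x)) x : ℝ≥0∞) := rfl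
  rw [hd, integral_withDensity_eq_integral_smul hmeas]
  have hpt : ∀ x : ℝ, Real.toNNReal (gaussianPDFReal 0 v x) • (A + B * x ^ 2 + C * x)
      = A * gaussianPDFReal 0 v x + B * (x ^ 2 * gaussianPDFReal 0 v x)
        + C * (x * gaussianPDFReal 0 v x) := by
    intro x
    rw [NNReal.smul_def, Real.coe_toNNReal _ (gaussianPDFReal_nonneg 0 v x), smul_eq_mul]
    ring
  rw [show (fun x => Real.toNNReal (gaussianPDFReal 0 v x) • (A + B * x ^ 2 + C * x))
      = fun x => A * gaussianPDFReal 0 v x + B * (x ^ 2 * gaussianPDFReal 0 v x)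
        + C * (x * gaussianPDFReal 0 v x) from funext hpt]
  have i1 : Integrable (fun x : ℝ => A * gaussianPDFReal 0 v x) :=
    (integrable_gaussianPDFReal 0 v).const_mul A
  have i2 : Integrable (fun x : ℝ => B * (x ^ 2 * gaussianPDFReal 0 v x)) :=
    (integrable_sq_pdf0 v hv).const_mul B
  have i3 : Integrable (fun x : ℝ => C * (x * gaussianPDFReal 0 v x)) :=
    (integrable_id_pdf0 v hv).const_mul C
  have i12 : Integrable (fun x : ℝ => A * gaussianPDFReal 0 v x
      + B * (x ^ 2 * gaussianPDFReal 0 v x)) volume := i1.add i2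
  rw [integral_add i12 i3, integral_add i1 i2,
    integral_const_mul, integral_const_mul, integral_const_mul,
    integral_gaussianPDFReal_eq_one 0 hv, moment1_pdf0 v hv, moment2_pdf0 v hv]
  ring

lemma gaussian_poly (m : ℝ) (v : ℝ≥0) (hv : v ≠ 0) (A B C : ℝ) :
    ∫ x, (A + B * (x - m) ^ 2 + C * (x - m)) ∂(gaussianReal m v) = A + B * v := by
  have hmap : (gaussianReal 0 v).map (· + m) = gaussianReal m v := by
    rw [gaussianReal_map_add_const]; simp
  rw [← hmap, integral_map (measurable_add_const m).aemeasurable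
    ((by fun_prop : Continuous fun x : ℝ => A + B * (x - m) ^ 2 + C * (x - m)).aestronglyMeasurable)]
  simp only [add_sub_cancel_right]
  exact gaussian0_poly v hv A B C


/-- KL divergence between the finite-time D³GM forward state and the
stationary law: with `c = 1 − e^{−2Θ(T)} ∈ (0,1)`,
`P_τ = N(μ(1 − e^{−Θ(T)}) + x₀ e^{−Θ(T)}, τ²λ²c)` and `Q_τ = N(μ, τ²λ²)`,
the divergence `K(τ) = KL(P_τ ‖ Q_τ)` equals
`−(1/2) log c − (1/2) e^{−2Θ(T)} + (x₀ − μ)² e^{−2Θ(T)} / (2τ²λ²)` and is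
strictly decreasing in `τ` on `(0, ∞)`; hence increasing the stiffness `τ`
brings `x_T` strictly closer in KL to `x_∞`. -/
theorem d3gm_kl_stiffness (x₀ μ lam ΘT : ℝ) (hx : x₀ ≠ μ) (hlam : lam ≠ 0)
    (hΘ : 0 < ΘT)
    (c : ℝ) (hc : c = 1 - Real.exp (-(2 * ΘT)))
    (K : ℝ → ℝ)
    (hK : ∀ τ : ℝ, 0 < τ → K τ =
      ∫ x, Real.log
        (gaussianPDFReal (μ * (1 - Real.exp (-ΘT)) + x₀ * Real.exp (-ΘT))
            (Real.toNNReal (τ ^ 2 * lam ^ 2 * c)) x /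
          gaussianPDFReal μ (Real.toNNReal (τ ^ 2 * lam ^ 2)) x)
        ∂(gaussianReal (μ * (1 - Real.exp (-ΘT)) + x₀ * Real.exp (-ΘT))
            (Real.toNNReal (τ ^ 2 * lam ^ 2 * c)))) :
    (∀ τ : ℝ, 0 < τ → K τ =
      -(1 / 2) * Real.log c - (1 / 2) * Real.exp (-(2 * ΘT)) +
        (x₀ - μ) ^ 2 * Real.exp (-(2 * ΘT)) / (2 * τ ^ 2 * lam ^ 2)) ∧
    StrictAntiOn K (Set.Ioi 0) := by
  have he2pos : 0 < Real.exp (-(2 * ΘT)) := Real.exp_pos _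
  have he2lt : Real.exp (-(2 * ΘT)) < 1 := by
    rw [Real.exp_lt_one_iff]; linarith
  have hc0 : 0 < c := by rw [hc]; linarith
  have hc1 : c < 1 := by rw [hc]; linarith
  have he2c : Real.exp (-(2 * ΘT)) = 1 - c := by rw [hc]; ring
  have heΘsq : Real.exp (-ΘT) ^ 2 = Real.exp (-(2 * ΘT)) := by
    rw [sq, ← Real.exp_add]; ring_nf
  set m : ℝ := μ * (1 - Real.exp (-ΘT)) + x₀ * Real.exp (-ΘT) with hm
  have hform : ∀ τ : ℝ, 0 < τ → K τ =
      -(1 / 2) * Real.log c - (1 / 2) * Real.exp (-(2 * ΘT)) +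
        (x₀ - μ) ^ 2 * Real.exp (-(2 * ΘT)) / (2 * τ ^ 2 * lam ^ 2) := by
    intro τ hτ
    have hv2 : (0:ℝ) < τ ^ 2 * lam ^ 2 := by positivity
    have hv1 : (0:ℝ) < τ ^ 2 * lam ^ 2 * c := by positivity
    set V1 : ℝ≥0 := Real.toNNReal (τ ^ 2 * lam ^ 2 * c) with hV1
    set V2 : ℝ≥0 := Real.toNNReal (τ ^ 2 * lam ^ 2) with hV2
    have hV1ne : V1 ≠ 0 := by
      rw [hV1]; exact (Real.toNNReal_pos.mpr hv1).ne'
    have hV2ne : V2 ≠ 0 := by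
      rw [hV2]; exact (Real.toNNReal_pos.mpr hv2).ne'
    have hV1c : (V1 : ℝ) = τ ^ 2 * lam ^ 2 * c := Real.coe_toNNReal _ hv1.le
    have hV2c : (V2 : ℝ) = τ ^ 2 * lam ^ 2 := Real.coe_toNNReal _ hv2.le
    set A : ℝ := -(1 / 2) * Real.log c + (x₀ - μ) ^ 2 * Real.exp (-(2 * ΘT)) /
      (2 * τ ^ 2 * lam ^ 2) with hA
    set B : ℝ := 1 / (2 * (τ ^ 2 * lam ^ 2)) - 1 / (2 * (τ ^ 2 * lam ^ 2 * c)) with hB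
    set C : ℝ := (m - μ) / (τ ^ 2 * lam ^ 2) with hC
    have hmμ : m - μ = (x₀ - μ) * Real.exp (-ΘT) := by rw [hm]; ring
    have hpt : ∀ x : ℝ,
        Real.log (gaussianPDFReal m V1 x / gaussianPDFReal μ V2 x)
          = A + B * (x - m) ^ 2 + C * (x - m) := by
      intro x
      have hp1 : 0 < gaussianPDFReal m V1 x := gaussianPDFReal_pos _ _ _ hV1ne
      have hp2 : 0 < gaussianPDFReal μ V2 x := gaussianPDFReal_pos _ _ _ hV2ne
      rw [Real.log_div hp1.ne' hp2.ne']
      rw [gaussianPDFReal, gaussianPDFReal,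
        Real.log_mul (by positivity) (Real.exp_ne_zero _),
        Real.log_mul (by positivity) (Real.exp_ne_zero _),
        Real.log_inv, Real.log_inv, Real.log_exp, Real.log_exp,
        Real.log_sqrt (by positivity), Real.log_sqrt (by positivity),
        hV1c, hV2c]
      have hlogc : Real.log (2 * π * (τ ^ 2 * lam ^ 2 * c))
          = Real.log (2 * π * (τ ^ 2 * lam ^ 2)) + Real.log c := by
        rw [show 2 * π * (τ ^ 2 * lam ^ 2 * c) = (2 * π * (τ ^ 2 * lam ^ 2)) * c by ring,
          Real.log_mul (by positivity) hc0.ne']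
      rw [hlogc, hA, hB, hC, hmμ]
      have : (x₀ - μ) ^ 2 * Real.exp (-(2 * ΘT))
          = ((x₀ - μ) * Real.exp (-ΘT)) ^ 2 := by rw [mul_pow, heΘsq]
      rw [this]
      field_simp
      ring
    rw [hK τ hτ]
    have hint : (∫ x, Real.log (gaussianPDFReal m V1 x / gaussianPDFReal μ V2 x)
          ∂(gaussianReal m V1))
        = ∫ x, (A + B * (x - m) ^ 2 + C * (x - m)) ∂(gaussianReal m V1) :=
      integral_congr_ae (ae_of_all _ fun x => hpt x)
    rw [hint, gaussian_poly m V1 hV1ne A B C, hV1c, hA, hB, he2c]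
    field_simp
    ring
  refine ⟨hform, ?_⟩
  intro a ha b hb hab
  simp only [Set.mem_Ioi] at ha hb
  rw [hform a ha, hform b hb]
  have hxμ : x₀ - μ ≠ 0 := sub_ne_zero.mpr hx
  have hnum : 0 < (x₀ - μ) ^ 2 * Real.exp (-(2 * ΘT)) := by positivity
  have hda : (0:ℝ) < 2 * a ^ 2 * lam ^ 2 := by positivity
  have hlt : 2 * a ^ 2 * lam ^ 2 < 2 * b ^ 2 * lam ^ 2 := by
    have hl2 : (0:ℝ) < lam ^ 2 := by positivity
    have hsq : a ^ 2 < b ^ 2 := by nlinarith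
    nlinarith [mul_pos (sub_pos.mpr hsq) hl2]
  have := div_lt_div_of_pos_left hnum hda hlt
  linarith
end
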